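/- (Lemma 6, type B.) Let n ≥ 2, let e_1, …, e_n be the standard basis of ℤ^n, let Δ_+ = { e_a − e_b : 1 ≤ a < b ≤ n } ∪ { e_a + e_b : 1 ≤ a < b ≤ n } ∪ { e_a : 1 ≤ a ≤ n }, let the simple roots be α_a = e_a − e_{a+1} for 1 ≤ a ≤ n−1 together with α_n = e_n, and let α_max = e_1 + e_2. Then there do not exist ξ, ζ ∈ Δ_+, a nonempty set S of simple roots, and positive integers (m_s)_{s∈S} such that α_max = ξ + ζ + Σ_{s∈S} m_s·s, ξ + ζ ∉ Δ_+, and for every s ∈ S both ξ + s ∉ Δ_+ and ζ + s ∉ Δ_+. -/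

import Mathlib

/-- The standard basis vector `e_a` of `ℤ^n`. -/
def stdBasis (n : ℕ) (a : Fin n) : Fin n → ℤ := Pi.single a 1

/-- The positive roots of type `B_n` realized in `ℤ^n`:
`Δ_+ = { e_a − e_b, e_a + e_b : a < b } ∪ { e_a }`. -/
def posRootsB (n : ℕ) : Set (Fin n → ℤ) :=
  {v | (∃ a b : Fin n, a < b ∧
          (v = stdBasis n a - stdBasis n b ∨ v = stdBasis n a + stdBasis n b)) ∨
        ∃ a : Fin n, v = stdBasis n a}

/-- The simple roots of type `B_n`: `α_a = e_a − e_{a+1}` for `a < n`, and `α_n = e_n`. -/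
def simpleRootsB (n : ℕ) (hn : 2 ≤ n) : Set (Fin n → ℤ) :=
  {v | (∃ a b : Fin n, (b : ℕ) = (a : ℕ) + 1 ∧ v = stdBasis n a - stdBasis n b) ∨
        v = stdBasis n ⟨n - 1, by omega⟩}

open scoped Matrix

lemma mem_e {n : ℕ} (a : Fin n) : stdBasis n a ∈ posRootsB n := Or.inr ⟨a, rfl⟩

lemma mem_add {n : ℕ} {a b : Fin n} (h : a ≠ b) :
    stdBasis n a + stdBasis n b ∈ posRootsB n := by
  rcases lt_or_gt_of_ne h with h | h
  · exact Or.inl ⟨a, b, h, Or.inr rfl⟩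
  · exact Or.inl ⟨b, a, h, Or.inr (add_comm _ _)⟩

lemma mem_sub {n : ℕ} {a b : Fin n} (h : a < b) :
    stdBasis n a - stdBasis n b ∈ posRootsB n :=
  Or.inl ⟨a, b, h, Or.inl rfl⟩

lemma e_dot_e {n : ℕ} (a b : Fin n) :
    stdBasis n a ⬝ᵥ stdBasis n b = if a = b then 1 else 0 := by
  simp [stdBasis, single_dotProduct, Pi.single_apply, eq_comm]

lemma key {n : ℕ} {x y : Fin n → ℤ} (hx : x ∈ posRootsB n) (hy : y ∈ posRootsB n)
    (hxy : x + y ∉ posRootsB n) : 0 ≤ x ⬝ᵥ y := by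
  by_contra hneg
  push_neg at hneg
  apply hxy
  rcases hx with ⟨a, b, hab, rfl | rfl⟩ | ⟨a, rfl⟩ <;>
    rcases hy with ⟨c, d, hcd, rfl | rfl⟩ | ⟨c, rfl⟩ <;>
      simp only [sub_dotProduct, dotProduct_sub, add_dotProduct,
        dotProduct_add, e_dot_e] at hneg
  -- case (a-b, c-d)
  · by_cases h1 : b = c
    · subst h1
      have h : (stdBasis n a - stdBasis n b) + (stdBasis n b - stdBasis n d)
           = stdBasis n a - stdBasis n d := by abel
      rw [h]; exact mem_sub (hab.trans hcd)
    · by_cases h2 : a = d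
      · subst h2
        have h : (stdBasis n a - stdBasis n b) + (stdBasis n c - stdBasis n a)
             = stdBasis n c - stdBasis n b := by abel
        rw [h]; exact mem_sub (hcd.trans hab)
      · exfalso; simp only [h1, h2, if_false] at hneg; split_ifs at hneg <;> omega
  -- case (a-b, c+d)
  · by_cases h1 : b = c
    · subst h1
      have h : (stdBasis n a - stdBasis n b) + (stdBasis n b + stdBasis n d)
           = stdBasis n a + stdBasis n d := by abel
      rw [h]; exact mem_add (hab.trans hcd).ne
    · by_cases h2 : b = d
      · subst h2
        by_cases h3 : a = c
        · exfalso; simp only [h1, h3, if_true, if_false] at hneg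
          split_ifs at hneg <;> fin_omega
        · have h : (stdBasis n a - stdBasis n b) + (stdBasis n c + stdBasis n b)
               = stdBasis n a + stdBasis n c := by abel
          rw [h]; exact mem_add h3
      · exfalso; simp only [h1, h2, if_false] at hneg; split_ifs at hneg <;> omega
  -- case (a-b, c)
  · by_cases h1 : b = c
    · subst h1
      have h : (stdBasis n a - stdBasis n b) + stdBasis n b = stdBasis n a := by abel
      rw [h]; exact mem_e a
    · exfalso; simp only [h1, if_false] at hneg; split_ifs at hneg <;> omega
  -- case (a+b, c-d)
  · by_cases h1 : a = d
    · subst h1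
      by_cases h2 : b = c
      · exfalso; fin_omega
      · have h : (stdBasis n a + stdBasis n b) + (stdBasis n c - stdBasis n a)
             = stdBasis n b + stdBasis n c := by abel
        rw [h]; exact mem_add h2
    · by_cases h2 : b = d
      · subst h2
        by_cases h3 : a = c
        · exfalso; simp only [h1, h3, if_true, if_false] at hneg
          split_ifs at hneg <;> fin_omega
        · have h : (stdBasis n a + stdBasis n b) + (stdBasis n c - stdBasis n b)
               = stdBasis n a + stdBasis n c := by abel
          rw [h]; exact mem_add h3
      · exfalso; simp only [h1, h2, if_false] at hneg; split_ifs at hneg <;> omega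
  -- case (a+b, c+d)
  · exfalso; split_ifs at hneg <;> omega
  -- case (a+b, c)
  · exfalso; split_ifs at hneg <;> omega
  -- case (a, c-d)
  · by_cases h1 : a = d
    · subst h1
      have h : stdBasis n a + (stdBasis n c - stdBasis n a) = stdBasis n c := by abel
      rw [h]; exact mem_e c
    · exfalso; simp only [h1, if_false] at hneg; split_ifs at hneg <;> omega
  -- case (a, c+d)
  · exfalso; split_ifs at hneg <;> omega
  -- case (a, c)
  · exfalso; split_ifs at hneg <;> omega

lemma norm_ge_one {n : ℕ} {x : Fin n → ℤ} (hx : x ∈ posRootsB n) : 1 ≤ x ⬝ᵥ x := by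
  rcases hx with ⟨a, b, hab, rfl | rfl⟩ | ⟨a, rfl⟩ <;>
      simp only [sub_dotProduct, dotProduct_sub, add_dotProduct,
        dotProduct_add, e_dot_e]
  · simp [hab.ne, hab.ne']
  · simp [hab.ne, hab.ne']
  · simp

lemma dot_sum {n : ℕ} {ι : Type*} (S : Finset ι) (x : Fin n → ℤ) (f : ι → Fin n → ℤ) :
    x ⬝ᵥ (∑ s ∈ S, f s) = ∑ s ∈ S, x ⬝ᵥ f s := by
  simp only [dotProduct, Finset.sum_apply, Finset.mul_sum]
  exact Finset.sum_comm

lemma simple_pos {n : ℕ} (hn : 2 ≤ n) {s : Fin n → ℤ} (hs : s ∈ simpleRootsB n hn) :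
    s ∈ posRootsB n := by
  rcases hs with ⟨a, b, hab, rfl⟩ | rfl
  · exact mem_sub (by fin_omega)
  · exact mem_e _

/-- the linear functional `v ↦ ∑ i, (n - i) * v i`, equal to `1` on all simple roots. -/
lemma weight_simple {n : ℕ} (hn : 2 ≤ n) {s : Fin n → ℤ} (hs : s ∈ simpleRootsB n hn) :
    (fun i : Fin n => (n : ℤ) - (i : ℕ)) ⬝ᵥ s = 1 := by
  rcases hs with ⟨a, b, hab, rfl⟩ | rfl <;>
      simp only [dotProduct_sub, dotProduct_single_one, stdBasis]
  · omega
  · have : (((⟨n - 1, by omega⟩ : Fin n) : ℕ) : ℤ) = (n : ℤ) - 1 := by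
      simp; omega
    rw [this]; ring

/-- **Lemma 6, type B.** There is no decomposition
`α_max = ξ + ζ + Σ_{s∈S} m_s·s` with `ξ, ζ ∈ Δ_+`, `S` a nonempty set of simple roots,
`m_s ≥ 1`, such that `ξ + ζ ∉ Δ_+` and `ξ + s ∉ Δ_+`, `ζ + s ∉ Δ_+` for all `s ∈ S`.
Here `α_max = e_1 + e_2`. -/
theorem no_decomposition_typeB (n : ℕ) (hn : 2 ≤ n) :
    ¬ ∃ (ξ ζ : Fin n → ℤ) (S : Finset (Fin n → ℤ)) (m : (Fin n → ℤ) → ℕ),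
        ξ ∈ posRootsB n ∧ ζ ∈ posRootsB n ∧
        S.Nonempty ∧ (↑S : Set (Fin n → ℤ)) ⊆ simpleRootsB n hn ∧ (∀ s ∈ S, 1 ≤ m s) ∧
        stdBasis n ⟨0, by omega⟩ + stdBasis n ⟨1, by omega⟩ =
          ξ + ζ + ∑ s ∈ S, (m s : ℤ) • s ∧
        ξ + ζ ∉ posRootsB n ∧
        ∀ s ∈ S, ξ + s ∉ posRootsB n ∧ ζ + s ∉ posRootsB n := by
  rintro ⟨ξ, ζ, S, m, hξ, hζ, hS, hSsub, hm, heq, hsum, hroot⟩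
  set σ : Fin n → ℤ := ∑ s ∈ S, (m s : ℤ) • s with hσdef
  have hsp : ∀ s ∈ S, s ∈ posRootsB n := fun s hs => simple_pos hn (hSsub hs)
  have hξζ : 0 ≤ ξ ⬝ᵥ ζ := key hξ hζ hsum
  have hξσ : 0 ≤ ξ ⬝ᵥ σ := by
    rw [hσdef, dot_sum]
    refine Finset.sum_nonneg fun s hs => ?_
    rw [dotProduct_smul, zsmul_eq_mul]
    exact mul_nonneg (Int.natCast_nonneg _) (key hξ (hsp s hs) (hroot s hs).1)
  have hζσ : 0 ≤ ζ ⬝ᵥ σ := by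
    rw [hσdef, dot_sum]
    refine Finset.sum_nonneg fun s hs => ?_
    rw [dotProduct_smul, zsmul_eq_mul]
    exact mul_nonneg (Int.natCast_nonneg _) (key hζ (hsp s hs) (hroot s hs).2)
  have hwσ : (fun i : Fin n => (n : ℤ) - (i : ℕ)) ⬝ᵥ σ = ∑ s ∈ S, (m s : ℤ) := by
    rw [hσdef, dot_sum]
    refine Finset.sum_congr rfl fun s hs => ?_
    rw [dotProduct_smul, zsmul_eq_mul, weight_simple hn (hSsub hs), mul_one]; norm_cast
  have hσne : σ ≠ 0 := by
    intro h0
    rw [h0, dotProduct_zero] at hwσ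
    obtain ⟨s₀, hs₀⟩ := hS
    have h1 : (1 : ℤ) ≤ ∑ s ∈ S, (m s : ℤ) := by
      calc (1 : ℤ) ≤ (m s₀ : ℤ) := by exact_mod_cast hm s₀ hs₀
        _ ≤ ∑ s ∈ S, (m s : ℤ) :=
          Finset.single_le_sum (fun s _ => Int.natCast_nonneg _) hs₀
    omega
  have hσσ : 1 ≤ σ ⬝ᵥ σ := by
    have h0 : 0 ≤ σ ⬝ᵥ σ := Finset.sum_nonneg fun i _ => mul_self_nonneg _
    have hne : σ ⬝ᵥ σ ≠ 0 := fun h => hσne (dotProduct_self_eq_zero.mp h)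
    omega
  have h2 := congrArg (fun v => v ⬝ᵥ v) heq
  simp only [add_dotProduct, dotProduct_add, e_dot_e, Fin.mk.injEq] at h2
  norm_num at h2
  have c1 := dotProduct_comm ζ ξ
  have c2 := dotProduct_comm σ ξ
  have c3 := dotProduct_comm σ ζ
  have n1 := norm_ge_one hξ
  have n2 := norm_ge_one hζ
  linarith
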